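/- Let A, B be real symmetric positive definite n×n matrices. Then det(B) − det(A) = tr(𝐀 · (B − A)), where 𝐀 := ∫₀¹ det((1−t)B + tA) · ((1−t)B + tA)⁻¹ dt. Moreover 𝐀 is symmetric positive definite. -/

import Mathlib

open Matrix

open Polynomial

lemma aux_fact {n : ℕ} (S C : Matrix (Fin n) (Fin n) ℝ) (hS : IsUnit S.det) :
    S.map Polynomial.C + (X : ℝ[X]) • C.map Polynomial.C
      = S.map Polynomial.C * (1 + (X : ℝ[X]) • (S⁻¹ * C).map Polynomial.C) := by
  rw [mul_add, mul_one, mul_smul_comm, ← Matrix.map_mul, Matrix.mul_nonsing_inv_cancel_left _ _ hS]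

lemma aux_hasDerivAt_det_zero {n : ℕ} (S C : Matrix (Fin n) (Fin n) ℝ) (hS : IsUnit S.det) :
    HasDerivAt (fun s : ℝ => (S + s • C).det) ((Matrix.adjugate S * C).trace) 0 := by
  set D := S⁻¹ * C with hD
  set p : ℝ[X] := (S.map Polynomial.C + (X : ℝ[X]) • C.map Polynomial.C).det with hpdef
  have hp : ∀ s : ℝ, p.eval s = (S + s • C).det := by
    intro s
    have h1 := RingHom.map_det (Polynomial.evalRingHom s)
      (S.map Polynomial.C + (X : ℝ[X]) • C.map Polynomial.C)
    have h2 : (Polynomial.evalRingHom s).mapMatrix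
        (S.map Polynomial.C + (X : ℝ[X]) • C.map Polynomial.C) = S + s • C := by
      ext i j
      simp only [RingHom.mapMatrix_apply, Matrix.map_apply, Matrix.add_apply, Matrix.smul_apply,
        smul_eq_mul, coe_evalRingHom, eval_add, eval_mul, eval_X, eval_C]
    rw [hpdef, ← h2, ← h1]
    simp
  have hderiv : p.derivative.eval 0 = (Matrix.adjugate S * C).trace := by
    have hfact := aux_fact S C hS
    rw [hpdef, hfact, Matrix.det_mul]
    have hdetS : (S.map Polynomial.C).det = Polynomial.C S.det := by
      rw [← RingHom.mapMatrix_apply, ← RingHom.map_det]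
    rw [hdetS, derivative_mul, derivative_C]
    simp only [zero_mul, zero_add, eval_add, eval_mul, eval_C]
    rw [Matrix.derivative_det_one_add_X_smul]
    have hadj : Matrix.adjugate S = S.det • S⁻¹ := by
      rw [Matrix.inv_def, smul_smul, Ring.mul_inverse_cancel _ hS, one_smul]
    rw [hadj, Matrix.smul_mul, Matrix.trace_smul, smul_eq_mul]
  have h := p.hasDerivAt (0 : ℝ)
  rw [hderiv] at h
  exact h.congr_of_eventuallyEq (Filter.Eventually.of_forall fun s => (hp s).symm)

lemma aux_hasDerivAt_det {n : ℕ} (S C : Matrix (Fin n) (Fin n) ℝ) (t₀ : ℝ)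
    (hS : IsUnit (S + t₀ • C).det) :
    HasDerivAt (fun t : ℝ => (S + t • C).det) ((Matrix.adjugate (S + t₀ • C) * C).trace) t₀ := by
  have h0 := aux_hasDerivAt_det_zero (S + t₀ • C) C hS
  have h0' : HasDerivAt (fun s : ℝ => ((S + t₀ • C) + s • C).det)
      ((Matrix.adjugate (S + t₀ • C) * C).trace) (t₀ - t₀) := by
    rw [sub_self]; exact h0
  have h := HasDerivAt.comp_sub_const t₀ t₀ h0'
  refine h.congr_of_eventuallyEq (Filter.Eventually.of_forall fun t => ?_)
  show (S + t • C).det = ((S + t₀ • C) + (t - t₀) • C).det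
  congr 1
  rw [sub_smul]
  abel

lemma aux_posDef {n : ℕ} {A B : Matrix (Fin n) (Fin n) ℝ} (hA : A.PosDef) (hB : B.PosDef)
    {t : ℝ} (ht0 : 0 ≤ t) (ht1 : t ≤ 1) : ((1 - t) • B + t • A).PosDef := by
  refine Matrix.posDef_iff_dotProduct_mulVec.mpr ⟨?_, fun x hx => ?_⟩
  · have h1 : Bᵀ = B := by rw [← Matrix.conjTranspose_eq_transpose_of_trivial]; exact hB.1
    have h2 : Aᵀ = A := by rw [← Matrix.conjTranspose_eq_transpose_of_trivial]; exact hA.1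
    show ((1 - t) • B + t • A)ᴴ = _
    simp [Matrix.conjTranspose_add, Matrix.conjTranspose_smul, h1, h2]
  · have hb := hB.dotProduct_mulVec_pos hx
    have ha := hA.dotProduct_mulVec_pos hx
    have hq : star x ⬝ᵥ (((1 - t) • B + t • A) *ᵥ x)
        = (1 - t) * (star x ⬝ᵥ (B *ᵥ x)) + t * (star x ⬝ᵥ (A *ᵥ x)) := by
      rw [Matrix.add_mulVec, Matrix.smul_mulVec, Matrix.smul_mulVec,
        dotProduct_add, dotProduct_smul, dotProduct_smul, smul_eq_mul, smul_eq_mul]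
    rw [hq]
    rcases eq_or_lt_of_le ht1 with h | h
    · rw [h]
      simpa using ha
    · have h1 := mul_pos (sub_pos.2 h) hb
      have h2 := mul_nonneg ht0 ha.le
      linarith

open intervalIntegral MeasureTheory in
lemma aux_integral_trace {n : ℕ} (F : ℝ → Matrix (Fin n) (Fin n) ℝ) (hF : Continuous F)
    (E : Matrix (Fin n) (Fin n) ℝ) :
    ((Matrix.of fun i j => ∫ t in (0:ℝ)..1, F t i j) * E).trace
      = ∫ t in (0:ℝ)..1, (F t * E).trace := by
  have hint : ∀ i j : Fin n, IntervalIntegrable (fun t => F t i j * E j i) volume 0 1 :=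
    fun i j => ((hF.matrix_elem i j).mul continuous_const).intervalIntegrable 0 1
  have hint2 : ∀ i : Fin n,
      IntervalIntegrable (fun t => ∑ j, F t i j * E j i) volume 0 1 := fun i =>
    (continuous_finset_sum _ fun j _ => (hF.matrix_elem i j).mul continuous_const
      ).intervalIntegrable 0 1
  simp only [Matrix.trace, Matrix.diag_apply, Matrix.mul_apply, Matrix.of_apply]
  calc (∑ i, ∑ j, (∫ t in (0:ℝ)..1, F t i j) * E j i)
      = ∑ i, ∑ j, ∫ t in (0:ℝ)..1, F t i j * E j i := by
        refine Finset.sum_congr rfl fun i _ => Finset.sum_congr rfl fun j _ => ?_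
        exact (intervalIntegral.integral_mul_const (E j i) (fun t => F t i j)).symm
    _ = ∑ i, ∫ t in (0:ℝ)..1, ∑ j, F t i j * E j i := by
        refine Finset.sum_congr rfl fun i _ => ?_
        rw [intervalIntegral.integral_finset_sum (fun j _ => hint i j)]
    _ = ∫ t in (0:ℝ)..1, ∑ i, ∑ j, F t i j * E j i := by
        rw [intervalIntegral.integral_finset_sum (fun i _ => hint2 i)]

open intervalIntegral MeasureTheory in
lemma aux_integral_quadform {n : ℕ} (F : ℝ → Matrix (Fin n) (Fin n) ℝ) (hF : Continuous F)
    (x : Fin n → ℝ) :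
    x ⬝ᵥ ((Matrix.of fun i j => ∫ t in (0:ℝ)..1, F t i j) *ᵥ x)
      = ∫ t in (0:ℝ)..1, x ⬝ᵥ (F t *ᵥ x) := by
  have hint : ∀ i j : Fin n,
      IntervalIntegrable (fun t => x i * (F t i j * x j)) volume 0 1 :=
    fun i j => (continuous_const.mul ((hF.matrix_elem i j).mul continuous_const)
      ).intervalIntegrable 0 1
  have hint2 : ∀ i : Fin n,
      IntervalIntegrable (fun t => ∑ j, x i * (F t i j * x j)) volume 0 1 := fun i =>
    (continuous_finset_sum _ fun j _ =>
      continuous_const.mul ((hF.matrix_elem i j).mul continuous_const)).intervalIntegrable 0 1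
  simp only [Matrix.mulVec, dotProduct, Matrix.of_apply, Finset.mul_sum]
  calc (∑ i, ∑ j, x i * ((∫ t in (0:ℝ)..1, F t i j) * x j))
      = ∑ i, ∑ j, ∫ t in (0:ℝ)..1, x i * (F t i j * x j) := by
        refine Finset.sum_congr rfl fun i _ => Finset.sum_congr rfl fun j _ => ?_
        rw [← intervalIntegral.integral_mul_const, ← intervalIntegral.integral_const_mul]
    _ = ∑ i, ∫ t in (0:ℝ)..1, ∑ j, x i * (F t i j * x j) := by
        refine Finset.sum_congr rfl fun i _ => ?_
        rw [intervalIntegral.integral_finset_sum (fun j _ => hint i j)]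
    _ = ∫ t in (0:ℝ)..1, ∑ i, ∑ j, x i * (F t i j * x j) := by
        rw [intervalIntegral.integral_finset_sum (fun i _ => hint2 i)]

theorem stmt5 {n : ℕ} (A B : Matrix (Fin n) (Fin n) ℝ)
    (hA : A.PosDef) (hB : B.PosDef) :
    let M : ℝ → Matrix (Fin n) (Fin n) ℝ := fun t => (1 - t) • B + t • A
    let 𝒜 : Matrix (Fin n) (Fin n) ℝ :=
      Matrix.of fun i j => ∫ t in (0 : ℝ)..1, (M t).det * (M t)⁻¹ i j
    B.det - A.det = (𝒜 * (B - A)).trace ∧ 𝒜.IsSymm ∧ 𝒜.PosDef := by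
  intro M 𝒜
  have hM : ∀ t : ℝ, M t = B + t • (A - B) := by
    intro t
    show (1 - t) • B + t • A = _
    ext i j
    simp only [Matrix.add_apply, Matrix.smul_apply, Matrix.sub_apply, smul_eq_mul]
    ring
  have h01 : Set.uIcc (0:ℝ) 1 = Set.Icc 0 1 := Set.uIcc_of_le zero_le_one
  have hMpos : ∀ t ∈ Set.Icc (0:ℝ) 1, (M t).PosDef := fun t ht => aux_posDef hA hB ht.1 ht.2
  have hMdet : ∀ t ∈ Set.Icc (0:ℝ) 1, IsUnit (M t).det :=
    fun t ht => ((hMpos t ht).det_pos.ne').isUnit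
  have hadj : ∀ t ∈ Set.Icc (0:ℝ) 1, (M t).adjugate = (M t).det • (M t)⁻¹ := by
    intro t ht
    rw [Matrix.inv_def, smul_smul, Ring.mul_inverse_cancel _ (hMdet t ht), one_smul]
  set F : ℝ → Matrix (Fin n) (Fin n) ℝ := fun t => (M t).adjugate with hFdef
  have hMcont : Continuous M := by
    have h : Continuous fun t : ℝ => B + t • (A - B) :=
      continuous_const.add (continuous_id.smul continuous_const)
    exact (funext hM : M = _) ▸ h
  have hFcont : Continuous F := hMcont.matrix_adjugate
  have hA𝒜 : 𝒜 = Matrix.of fun i j => ∫ t in (0:ℝ)..1, F t i j := by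
    ext i j
    show (∫ t in (0:ℝ)..1, (M t).det * (M t)⁻¹ i j) = ∫ t in (0:ℝ)..1, F t i j
    refine intervalIntegral.integral_congr fun t ht => ?_
    rw [h01] at ht
    show (M t).det * (M t)⁻¹ i j = (M t).adjugate i j
    rw [hadj t ht, Matrix.smul_apply, smul_eq_mul]
  have hAT : Aᵀ = A := by rw [← Matrix.conjTranspose_eq_transpose_of_trivial]; exact hA.1
  have hBT : Bᵀ = B := by rw [← Matrix.conjTranspose_eq_transpose_of_trivial]; exact hB.1
  have hMT : ∀ t : ℝ, (M t)ᵀ = M t := by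
    intro t
    show ((1 - t) • B + t • A)ᵀ = (1 - t) • B + t • A
    rw [Matrix.transpose_add, Matrix.transpose_smul, Matrix.transpose_smul, hAT, hBT]
  have hsymm : 𝒜.IsSymm := by
    show 𝒜ᵀ = 𝒜
    ext i j
    rw [Matrix.transpose_apply]
    show (∫ t in (0:ℝ)..1, (M t).det * (M t)⁻¹ j i) = ∫ t in (0:ℝ)..1, (M t).det * (M t)⁻¹ i j
    refine intervalIntegral.integral_congr fun t _ => ?_
    have hinv : ((M t)⁻¹)ᵀ = (M t)⁻¹ := by rw [Matrix.transpose_nonsing_inv, hMT]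
    have h2 : (M t)⁻¹ j i = (M t)⁻¹ i j := by
      conv_rhs => rw [← hinv]
      rw [Matrix.transpose_apply]
    rw [h2]
  have hg : ∀ t ∈ Set.uIcc (0:ℝ) 1, HasDerivAt (fun s : ℝ => (B + s • (A - B)).det)
      ((F t * (A - B)).trace) t := by
    intro t ht
    rw [h01] at ht
    have h := aux_hasDerivAt_det B (A - B) t (by rw [← hM t]; exact hMdet t ht)
    have hFt : F t = (B + t • (A - B)).adjugate := by show (M t).adjugate = _; rw [hM t]
    rw [hFt]
    exact h
  have hcont2 : Continuous fun t => (F t * (A - B)).trace :=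
    (hFcont.matrix_mul continuous_const).matrix_trace
  have hFTC := intervalIntegral.integral_eq_sub_of_hasDerivAt hg
    (hcont2.intervalIntegrable 0 1)
  have hend : (B + (1:ℝ) • (A - B)) = A := by rw [one_smul]; abel
  have hstart : (B + (0:ℝ) • (A - B)) = B := by rw [zero_smul, add_zero]
  rw [hend, hstart] at hFTC
  refine ⟨?_, hsymm, ?_⟩
  · have htr : (𝒜 * (B - A)).trace = ∫ t in (0:ℝ)..1, (F t * (B - A)).trace := by
      rw [hA𝒜]; exact aux_integral_trace F hFcont (B - A)
    have hneg : ∀ t : ℝ, (F t * (B - A)).trace = -((F t * (A - B)).trace) := by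
      intro t
      rw [show B - A = -(A - B) from (neg_sub _ _).symm, Matrix.mul_neg, Matrix.trace_neg]
    rw [htr]
    simp_rw [hneg]
    rw [intervalIntegral.integral_neg, hFTC]
    ring
  · refine Matrix.posDef_iff_dotProduct_mulVec.mpr ⟨?_, fun x hx => ?_⟩
    · show 𝒜ᴴ = 𝒜
      rw [Matrix.conjTranspose_eq_transpose_of_trivial]
      exact hsymm
    · have hsx : star x = x := star_trivial x
      rw [hsx, hA𝒜, aux_integral_quadform F hFcont x]
      refine intervalIntegral.intervalIntegral_pos_of_pos_on
        ((continuous_const.dotProduct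
          (hFcont.matrix_mulVec continuous_const)).intervalIntegrable 0 1)
        (fun t ht => ?_) one_pos
      have ht' : t ∈ Set.Icc (0:ℝ) 1 := Set.Ioo_subset_Icc_self ht
      have hpd := hMpos t ht'
      have hiv := hpd.inv.dotProduct_mulVec_pos hx
      rw [star_trivial] at hiv
      show 0 < x ⬝ᵥ ((M t).adjugate *ᵥ x)
      rw [hadj t ht', Matrix.smul_mulVec, dotProduct_smul, smul_eq_mul]
      exact mul_pos hpd.det_pos hiv
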